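/- Let u ∈ Matrix (Fin m) (Fin m) (Matrix (Fin n) (Fin n) ℂ) be unitary and let Q ∈ Matrix (Fin m) (Fin m) ℂ be positive definite such that u satisfies (★_Q): uᵀ is invertible and ((Qᵀ)⁻²⊗1) * (u⁻¹)ᵀ * ((Qᵀ)²⊗1) = (uᵀ)⁻¹. Then there exists a sequence w : ℕ → Matrix (Fin m) (Fin m) (Matrix (Fin n) (Fin n) ℂ) with w 0 = u such that every w p is invertible, w (p+1) = ((w p)⁻¹)ᵀ for all p, and the closed formulas hold: w (2p) = (Q^(2p)⊗1) * u * ((Q⁻¹)^(2p)⊗1) and w (2p+1) = (((Q⁻¹)^(2p))ᵀ⊗1) * (u⁻¹)ᵀ * ((Q^(2p))ᵀ⊗1) for all p ∈ ℕ. In particular u satisfies condition (iv) of Theorem 1.1. -/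

import Mathlib

open Matrix
open scoped ComplexOrder

namespace Stmt16Aux

variable {m n : ℕ}

local notation "Blk" => Matrix (Fin m) (Fin m) (Matrix (Fin n) (Fin n) ℂ)
local notation "alg" => algebraMap ℂ (Matrix (Fin n) (Fin n) ℂ)

/-- Realization of a block matrix as a big matrix. -/
def toBig (x : Blk) : Matrix (Fin m × Fin n) (Fin m × Fin n) ℂ :=
  Matrix.of fun p q => x p.1 q.1 p.2 q.2

lemma toBig_apply (x : Blk) (p q : Fin m × Fin n) :
    toBig x p q = x p.1 q.1 p.2 q.2 := rfl

lemma toBig_mul (x y : Blk) : toBig (x * y) = toBig x * toBig y := by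
  ext ⟨a, i⟩ ⟨b, j⟩
  simp only [toBig_apply, Matrix.mul_apply, Matrix.sum_apply, Fintype.sum_prod_type]

lemma toBig_one : toBig (1 : Blk) = 1 := by
  ext ⟨a, i⟩ ⟨b, j⟩
  rcases eq_or_ne a b with hab | hab
  · simp [toBig_apply, Matrix.one_apply, Prod.ext_iff, hab]
  · simp [toBig_apply, Matrix.one_apply, Prod.ext_iff, hab]

lemma toBig_star (x : Blk) : toBig (star x) = star (toBig x) := by
  ext ⟨a, i⟩ ⟨b, j⟩
  simp [toBig_apply, Matrix.star_apply, Matrix.star_eq_conjTranspose,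
    Matrix.conjTranspose_apply]

lemma toBig_injective : Function.Injective (toBig (m := m) (n := n)) := by
  intro x y h
  ext a b i j
  have := congrFun (congrFun h (a, i)) (b, j)
  simpa [toBig_apply] using this

/-- The double trace of a block matrix. -/
noncomputable def Tr2 (x : Blk) : ℂ := ∑ a, ∑ i, x a a i i

lemma trace_toBig (x : Blk) : (toBig x).trace = Tr2 x := by
  simp [Matrix.trace, Matrix.diag, toBig_apply, Tr2, Fintype.sum_prod_type]

lemma Tr2_one : Tr2 (1 : Blk) = (m * n : ℂ) := by
  simp [Tr2, Matrix.one_apply]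

lemma Tr2_transpose_mul_transpose (x y : Blk) :
    Tr2 (xᵀ * yᵀ) = Tr2 (x * y) := by
  simp only [Tr2, Matrix.mul_apply, Matrix.sum_apply, Matrix.transpose_apply]
  calc ∑ a, ∑ i, ∑ b, ∑ k, x b a i k * y a b k i
      = ∑ a, ∑ b, ∑ i, ∑ k, x b a i k * y a b k i :=
        Finset.sum_congr rfl fun a _ => Finset.sum_comm
    _ = ∑ b, ∑ a, ∑ i, ∑ k, x b a i k * y a b k i := Finset.sum_comm
    _ = ∑ a, ∑ i, ∑ b, ∑ k, x a b i k * y b a k i :=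
        Finset.sum_congr rfl fun b _ => Finset.sum_comm

/-- Transposing a product with a scalar-block matrix on the left. -/
lemma mapc_mul_transpose (M : Matrix (Fin m) (Fin m) ℂ) (x : Blk) :
    ((M.map alg) * x)ᵀ = xᵀ * (M.map alg)ᵀ := by
  refine Matrix.ext fun a b => ?_
  simp only [Matrix.transpose_apply, Matrix.mul_apply, Matrix.map_apply]
  apply Finset.sum_congr rfl
  intro c _
  exact Algebra.commutes (M b c) (x c a)

/-- Transposing a product with a scalar-block matrix on the right. -/
lemma mul_mapc_transpose (M : Matrix (Fin m) (Fin m) ℂ) (x : Blk) :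
    (x * (M.map alg))ᵀ = (M.map alg)ᵀ * xᵀ := by
  refine Matrix.ext fun a b => ?_
  simp only [Matrix.transpose_apply, Matrix.mul_apply, Matrix.map_apply]
  apply Finset.sum_congr rfl
  intro c _
  exact (Algebra.commutes (M c a) (x b c)).symm

lemma star_mapc (M : Matrix (Fin m) (Fin m) ℂ) :
    star (M.map alg) = Mᴴ.map alg := by
  ext a b i j
  simp only [Matrix.star_apply, Matrix.star_eq_conjTranspose, Matrix.conjTranspose_apply,
    Matrix.map_apply, Matrix.algebraMap_matrix_apply, Algebra.algebraMap_self, RingHom.id_apply]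
  rcases eq_or_ne i j with hij | hij
  · simp [hij]
  · simp [hij, Ne.symm hij]

lemma posSemidef_toBig_map {M : Matrix (Fin m) (Fin m) ℂ} (hM : M.PosSemidef) :
    (toBig (M.map alg)).PosSemidef := by
  refine Matrix.PosSemidef.of_dotProduct_mulVec_nonneg ?_ ?_
  · ext ⟨a, i⟩ ⟨b, j⟩
    simp only [Matrix.conjTranspose_apply, toBig_apply, Matrix.map_apply,
      Matrix.algebraMap_matrix_apply, Algebra.algebraMap_self, RingHom.id_apply]
    rcases eq_or_ne i j with hij | hij
    · simpa [hij] using hM.isHermitian.apply a b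
    · simp [hij, Ne.symm hij]
  · intro x
    have key : star x ⬝ᵥ (toBig (M.map alg)) *ᵥ x
        = ∑ i, (star (fun a => x (a, i)) ⬝ᵥ M *ᵥ (fun a => x (a, i))) := by
      simp only [dotProduct, Matrix.mulVec, Pi.star_apply,
        Fintype.sum_prod_type, toBig_apply, Matrix.map_apply,
        Matrix.algebraMap_matrix_apply, Algebra.algebraMap_self, RingHom.id_apply,
        ite_mul, zero_mul, Finset.sum_ite_eq, Finset.mem_univ, if_true]
      rw [Finset.sum_comm]
    rw [key]
    exact Finset.sum_nonneg fun i _ => hM.dotProduct_mulVec_nonneg _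

/-- Monoid lemma: powers of two-sided inverses. -/
lemma pow_mul_pow_eq_one'' {M : Type*} [Monoid M] {a b : M}
    (h1 : a * b = 1) (h2 : b * a = 1) (k : ℕ) : a ^ k * b ^ k = 1 := by
  induction k with
  | zero => simp
  | succ k ih =>
    rw [pow_succ, pow_succ', mul_assoc, ← mul_assoc a b, h1, one_mul, ih]

/-- All-ones from AM-GM equality. -/
lemma all_eq_one {ι : Type*} [Fintype ι] (f : ι → ℝ) (h0 : ∀ i, 0 ≤ f i)
    (hs : ∑ i, f i = Fintype.card ι) (hp : ∏ i, f i = 1) : ∀ i, f i = 1 := by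
  have hpos : ∀ i, 0 < f i := by
    intro i
    rcases lt_or_eq_of_le (h0 i) with h | h
    · exact h
    · exfalso
      have : (∏ j, f j) = 0 := Finset.prod_eq_zero (Finset.mem_univ i) h.symm
      rw [hp] at this; norm_num at this
  have hlog : ∑ i, Real.log (f i) = 0 := by
    rw [← Real.log_prod fun i _ => (hpos i).ne', hp, Real.log_one]
  have hsub : ∑ i, (f i - 1) = 0 := by
    rw [Finset.sum_sub_distrib, hs]
    simp
  by_contra hcon
  push_neg at hcon
  obtain ⟨j, hj⟩ := hcon
  have hlt : ∑ i, Real.log (f i) < ∑ i, (f i - 1) :=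
    Finset.sum_lt_sum (fun i _ => Real.log_le_sub_one_of_pos (hpos i))
      ⟨j, Finset.mem_univ j, Real.log_lt_sub_one_of_pos (hpos j) hj⟩
  rw [hlog, hsub] at hlt
  exact lt_irrefl 0 hlt

/-- A PSD matrix with trace = card and det = 1 is the identity. -/
lemma psd_eq_one_of_trace_det {ι : Type*} [Fintype ι] [DecidableEq ι]
    (T : Matrix ι ι ℂ) (hT : T.PosSemidef) (hdet : T.det = 1)
    (htr : T.trace = (Fintype.card ι : ℂ)) : T = 1 := by
  have hH : T.IsHermitian := hT.isHermitian
  have h0 : ∀ i, 0 ≤ hH.eigenvalues i := hT.eigenvalues_nonneg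
  have hprod : ∏ i, hH.eigenvalues i = 1 := by
    have h := hH.det_eq_prod_eigenvalues
    rw [hdet] at h
    norm_cast at h
    rw [← RCLike.ofReal_one (K := ℂ)] at h
    exact (RCLike.ofReal_inj.mp h).symm
  have hVmem := (hH.eigenvectorUnitary).2
  have hVsV : star (hH.eigenvectorUnitary : Matrix ι ι ℂ) * (hH.eigenvectorUnitary : Matrix ι ι ℂ)
      = 1 := (Matrix.mem_unitaryGroup_iff').mp hVmem
  have hVVs : (hH.eigenvectorUnitary : Matrix ι ι ℂ) * star (hH.eigenvectorUnitary : Matrix ι ι ℂ)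
      = 1 := (Matrix.mem_unitaryGroup_iff).mp hVmem
  have hsp := hH.spectral_theorem
  rw [Unitary.conjStarAlgAut_apply] at hsp
  have htrace_eigen : T.trace = ∑ i, ((hH.eigenvalues i : ℝ) : ℂ) := by
    calc T.trace
        = ((hH.eigenvectorUnitary : Matrix ι ι ℂ)
            * Matrix.diagonal (RCLike.ofReal ∘ hH.eigenvalues)
            * star (hH.eigenvectorUnitary : Matrix ι ι ℂ)).trace := by
          rw [← hsp]
      _ = (star (hH.eigenvectorUnitary : Matrix ι ι ℂ)
            * ((hH.eigenvectorUnitary : Matrix ι ι ℂ)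
              * Matrix.diagonal (RCLike.ofReal ∘ hH.eigenvalues))).trace :=
          Matrix.trace_mul_comm _ _
      _ = (Matrix.diagonal (RCLike.ofReal ∘ hH.eigenvalues)).trace := by
          rw [← mul_assoc, hVsV, one_mul]
      _ = ∑ i, ((hH.eigenvalues i : ℝ) : ℂ) := by
          simp [Matrix.trace_diagonal]
  have hsum : ∑ i, hH.eigenvalues i = Fintype.card ι := by
    have he := htrace_eigen
    rw [htr] at he
    norm_cast at he
    exact he.symm
  have hall := all_eq_one hH.eigenvalues h0 hsum hprod
  have hdiag : Matrix.diagonal (RCLike.ofReal ∘ hH.eigenvalues) = (1 : Matrix ι ι ℂ) := by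
    have hfn : (RCLike.ofReal ∘ hH.eigenvalues : ι → ℂ) = fun _ => 1 := by
      funext i; simp [hall i]
    rw [hfn]
    exact Matrix.diagonal_one
  rw [hsp, hdiag, mul_one, hVVs]

open scoped MatrixOrder in
/-- Square root of a PSD matrix (replacement for the removed Mathlib def). -/
noncomputable def _root_.Matrix.PosSemidef.sqrt {ι : Type*} [Fintype ι] [DecidableEq ι]
    {A : Matrix ι ι ℂ} (_ : A.PosSemidef) : Matrix ι ι ℂ := CFC.sqrt A

open scoped MatrixOrder in
lemma _root_.Matrix.PosSemidef.posSemidef_sqrt {ι : Type*} [Fintype ι] [DecidableEq ι]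
    {A : Matrix ι ι ℂ} (hA : A.PosSemidef) : hA.sqrt.PosSemidef :=
  Matrix.nonneg_iff_posSemidef.mp (CFC.sqrt_nonneg A)

open scoped MatrixOrder in
lemma _root_.Matrix.PosSemidef.sqrt_mul_self {ι : Type*} [Fintype ι] [DecidableEq ι]
    {A : Matrix ι ι ℂ} (hA : A.PosSemidef) : hA.sqrt * hA.sqrt = A :=
  CFC.sqrt_mul_sqrt_self A (Matrix.nonneg_iff_posSemidef.mpr hA)

end Stmt16Aux

open Stmt16Aux

/-- a twisted biunitary `u` (unitary and satisfying `(★_Q)` for a positive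
definite `Q`) satisfies condition (iv) of Theorem 1.1: the sequence `w 0 = u`,
`w (p+1) = ((w p)⁻¹)ᵀ` is defined with every term invertible, and the closed formulas
`w (2p) = (Q^{2p}⊗1) u ((Q⁻¹)^{2p}⊗1)` and
`w (2p+1) = (((Q⁻¹)^{2p})ᵀ⊗1) (u⁻¹)ᵀ ((Q^{2p})ᵀ⊗1)` hold. -/
theorem stmt16 {m n : ℕ}
    (u : Matrix (Fin m) (Fin m) (Matrix (Fin n) (Fin n) ℂ))
    (hu : star u * u = 1 ∧ u * star u = 1)
    (Q : Matrix (Fin m) (Fin m) ℂ) (hQ : Q.PosDef)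
    (hstarQ : IsUnit uᵀ ∧
      (((Qᵀ) ^ 2)⁻¹).map (algebraMap ℂ (Matrix (Fin n) (Fin n) ℂ)) * (Ring.inverse u)ᵀ *
          ((Qᵀ) ^ 2).map (algebraMap ℂ (Matrix (Fin n) (Fin n) ℂ)) = Ring.inverse uᵀ) :
    ∃ w : ℕ → Matrix (Fin m) (Fin m) (Matrix (Fin n) (Fin n) ℂ),
      w 0 = u ∧
      (∀ p : ℕ, IsUnit (w p)) ∧
      (∀ p : ℕ, w (p + 1) = (Ring.inverse (w p))ᵀ) ∧
      (∀ p : ℕ, w (2 * p) =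
        (Q ^ (2 * p)).map (algebraMap ℂ (Matrix (Fin n) (Fin n) ℂ)) * u *
          ((Q⁻¹) ^ (2 * p)).map (algebraMap ℂ (Matrix (Fin n) (Fin n) ℂ))) ∧
      (∀ p : ℕ, w (2 * p + 1) =
        (((Q⁻¹) ^ (2 * p))ᵀ).map (algebraMap ℂ (Matrix (Fin n) (Fin n) ℂ)) *
          (Ring.inverse u)ᵀ *
          ((Q ^ (2 * p))ᵀ).map (algebraMap ℂ (Matrix (Fin n) (Fin n) ℂ))) := by
  classical
  -- basic unit facts about u
  have huIsUnit : IsUnit u := ⟨⟨u, star u, hu.2, hu.1⟩, rfl⟩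
  have hRiu : Ring.inverse u = star u := by
    calc Ring.inverse u = Ring.inverse u * (u * star u) := by rw [hu.2, mul_one]
      _ = Ring.inverse u * u * star u := by rw [mul_assoc]
      _ = star u := by rw [Ring.inverse_mul_cancel _ huIsUnit, one_mul]
  -- determinant facts
  have hdetQ : IsUnit Q.det := hQ.det_pos.ne'.isUnit
  have hdetQ2 : IsUnit (Q ^ 2).det := by rw [Matrix.det_pow]; exact hdetQ.pow 2
  have hQ2inv_mul : (Q ^ 2)⁻¹ * Q ^ 2 = 1 := Matrix.nonsing_inv_mul _ hdetQ2
  have hQ2_mul_inv : Q ^ 2 * (Q ^ 2)⁻¹ = 1 := Matrix.mul_nonsing_inv _ hdetQ2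
  -- scalar-block building blocks
  set A2 : Matrix (Fin m) (Fin m) (Matrix (Fin n) (Fin n) ℂ) :=
    (Q ^ 2).map (algebraMap ℂ (Matrix (Fin n) (Fin n) ℂ)) with hA2
  set A1 : Matrix (Fin m) (Fin m) (Matrix (Fin n) (Fin n) ℂ) :=
    ((Q ^ 2)⁻¹).map (algebraMap ℂ (Matrix (Fin n) (Fin n) ℂ)) with hA1
  have hmapone : ((1 : Matrix (Fin m) (Fin m) ℂ).map (algebraMap ℂ (Matrix (Fin n) (Fin n) ℂ))) = 1 :=
    Matrix.map_one _ (map_zero _) (map_one _)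
  have hA1A2 : A1 * A2 = 1 := by
    rw [hA1, hA2, ← Matrix.map_mul, hQ2inv_mul, hmapone]
  have hA2A1 : A2 * A1 = 1 := by
    rw [hA1, hA2, ← Matrix.map_mul, hQ2_mul_inv, hmapone]
  -- rewrite hypothesis (★_Q) in terms of A1, A2 and star u
  have htp : (Qᵀ) ^ 2 = (Q ^ 2)ᵀ := (Matrix.transpose_pow Q 2).symm
  have htpi : ((Qᵀ) ^ 2)⁻¹ = ((Q ^ 2)⁻¹)ᵀ := by
    rw [htp, ← Matrix.transpose_nonsing_inv]
  have hstar : A1ᵀ * (star u)ᵀ * A2ᵀ = Ring.inverse uᵀ := by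
    have h := hstarQ.2
    rw [htpi, htp, hRiu, Matrix.transpose_map, Matrix.transpose_map] at h
    exact h
  -- the trace identity
  have hE : ((A1 * u)ᵀ) * ((A2 * star u)ᵀ) = 1 := by
    have h1 : uᵀ * Ring.inverse uᵀ = 1 := Ring.mul_inverse_cancel _ hstarQ.1
    calc ((A1 * u)ᵀ) * ((A2 * star u)ᵀ)
        = (uᵀ * A1ᵀ) * ((star u)ᵀ * A2ᵀ) := by
          rw [hA1, hA2, mapc_mul_transpose, mapc_mul_transpose]
      _ = uᵀ * (A1ᵀ * (star u)ᵀ * A2ᵀ) := by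
          simp only [mul_assoc]
      _ = uᵀ * Ring.inverse uᵀ := by rw [hstar]
      _ = 1 := h1
  have hTr : Tr2 ((A1 * u) * (A2 * star u)) = (m * n : ℂ) := by
    rw [← Tr2_transpose_mul_transpose, hE, Tr2_one]
  -- move to the big matrix world
  have hU1 : star (toBig u) * toBig u = 1 := by
    rw [← toBig_star, ← toBig_mul, hu.1, toBig_one]
  have hU2 : toBig u * star (toBig u) = 1 := by
    rw [← toBig_star, ← toBig_mul, hu.2, toBig_one]
  have hBiB : toBig A1 * toBig A2 = 1 := by rw [← toBig_mul, hA1A2, toBig_one]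
  have hBBi : toBig A2 * toBig A1 = 1 := by rw [← toBig_mul, hA2A1, toBig_one]
  have hTrBig : (toBig A1 * toBig u * (toBig A2 * star (toBig u))).trace = (m * n : ℂ) := by
    have heq : toBig A1 * toBig u * (toBig A2 * star (toBig u))
        = toBig ((A1 * u) * (A2 * star u)) := by
      rw [toBig_mul, toBig_mul, toBig_mul, toBig_star]
    rw [heq, trace_toBig, hTr]
  -- positive semidefiniteness
  have hQ2psd : (Q ^ 2).PosSemidef := hQ.posSemidef.pow 2
  have hQ2invpsd : ((Q ^ 2)⁻¹).PosSemidef := hQ2psd.inv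
  have hBpsd : (toBig A2).PosSemidef := by rw [hA2]; exact posSemidef_toBig_map hQ2psd
  have hBipsd : (toBig A1).PosSemidef := by rw [hA1]; exact posSemidef_toBig_map hQ2invpsd
  -- square root of toBig A1
  have hSpsd : hBipsd.sqrt.PosSemidef := hBipsd.posSemidef_sqrt
  have hSS : hBipsd.sqrt * hBipsd.sqrt = toBig A1 := hBipsd.sqrt_mul_self
  have hSH : hBipsd.sqrtᴴ = hBipsd.sqrt := hSpsd.isHermitian
  -- the matrix T
  have hR0psd : (toBig u * toBig A2 * star (toBig u)).PosSemidef := by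
    rw [Matrix.star_eq_conjTranspose]
    exact hBpsd.mul_mul_conjTranspose_same (toBig u)
  have hTpsd : (hBipsd.sqrt * (toBig u * toBig A2 * star (toBig u)) * hBipsd.sqrt).PosSemidef := by
    have h := hR0psd.mul_mul_conjTranspose_same hBipsd.sqrt
    rwa [hSH] at h
  have hTtr : (hBipsd.sqrt * (toBig u * toBig A2 * star (toBig u)) * hBipsd.sqrt).trace
      = (Fintype.card (Fin m × Fin n) : ℂ) := by
    have hcard : ((Fintype.card (Fin m × Fin n) : ℕ) : ℂ) = (m * n : ℂ) := by
      simp [Fintype.card_prod]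
    rw [hcard]
    calc (hBipsd.sqrt * (toBig u * toBig A2 * star (toBig u)) * hBipsd.sqrt).trace
        = (hBipsd.sqrt * ((toBig u * toBig A2 * star (toBig u)) * hBipsd.sqrt)).trace := by
          rw [mul_assoc]
      _ = (((toBig u * toBig A2 * star (toBig u)) * hBipsd.sqrt) * hBipsd.sqrt).trace :=
          Matrix.trace_mul_comm _ _
      _ = ((toBig u * toBig A2 * star (toBig u)) * (hBipsd.sqrt * hBipsd.sqrt)).trace := by
          rw [mul_assoc]
      _ = ((toBig u * toBig A2 * star (toBig u)) * toBig A1).trace := by rw [hSS]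
      _ = (toBig A1 * (toBig u * toBig A2 * star (toBig u))).trace :=
          Matrix.trace_mul_comm _ _
      _ = (toBig A1 * toBig u * (toBig A2 * star (toBig u))).trace := by
          rw [← mul_assoc, ← mul_assoc, mul_assoc]
      _ = (m * n : ℂ) := hTrBig
  have hTdet : (hBipsd.sqrt * (toBig u * toBig A2 * star (toBig u)) * hBipsd.sqrt).det = 1 := by
    have h1 : hBipsd.sqrt.det * hBipsd.sqrt.det = (toBig A1).det := by
      rw [← Matrix.det_mul, hSS]
    have h2 : (toBig u).det * (star (toBig u)).det = 1 := by
      rw [← Matrix.det_mul, hU2, Matrix.det_one]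
    have h3 : (toBig A1).det * (toBig A2).det = 1 := by
      rw [← Matrix.det_mul, hBiB, Matrix.det_one]
    have e1 : (hBipsd.sqrt * (toBig u * toBig A2 * star (toBig u)) * hBipsd.sqrt).det
        = hBipsd.sqrt.det * hBipsd.sqrt.det * ((toBig u).det * (star (toBig u)).det)
          * (toBig A2).det := by
      simp only [Matrix.det_mul]
      ring
    rw [e1, h1, h2, mul_one, h3]
  have hTone : hBipsd.sqrt * (toBig u * toBig A2 * star (toBig u)) * hBipsd.sqrt = 1 :=
    psd_eq_one_of_trace_det _ hTpsd hTdet hTtr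
  -- recover toBig u * toBig A2 * star (toBig u) = toBig A2
  have hR0B : toBig u * toBig A2 * star (toBig u) = toBig A2 := by
    calc toBig u * toBig A2 * star (toBig u)
        = 1 * (toBig u * toBig A2 * star (toBig u)) * 1 := by rw [one_mul, mul_one]
      _ = (toBig A2 * toBig A1) * (toBig u * toBig A2 * star (toBig u))
            * (toBig A1 * toBig A2) := by rw [hBBi, hBiB]
      _ = (toBig A2 * (hBipsd.sqrt * hBipsd.sqrt)) * (toBig u * toBig A2 * star (toBig u))
            * ((hBipsd.sqrt * hBipsd.sqrt) * toBig A2) := by rw [hSS]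
      _ = (toBig A2 * hBipsd.sqrt)
            * (hBipsd.sqrt * (toBig u * toBig A2 * star (toBig u)) * hBipsd.sqrt)
            * (hBipsd.sqrt * toBig A2) := by
          simp only [mul_assoc]
      _ = (toBig A2 * hBipsd.sqrt) * 1 * (hBipsd.sqrt * toBig A2) := by rw [hTone]
      _ = toBig A2 * (hBipsd.sqrt * hBipsd.sqrt) * toBig A2 := by
          simp only [mul_one, mul_assoc]
      _ = toBig A2 * toBig A1 * toBig A2 := by rw [hSS]
      _ = toBig A2 := by rw [hBBi, one_mul]
  have hUBcomm : toBig u * toBig A2 = toBig A2 * toBig u := by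
    calc toBig u * toBig A2 = toBig u * toBig A2 * (star (toBig u) * toBig u) := by
          rw [hU1, mul_one]
      _ = (toBig u * toBig A2 * star (toBig u)) * toBig u := by simp only [mul_assoc]
      _ = toBig A2 * toBig u := by rw [hR0B]
  -- pull the commutation back to the block world
  have hK : u * A2 = A2 * u := by
    apply toBig_injective
    rw [toBig_mul, toBig_mul]
    exact hUBcomm
  -- star u also commutes with A2
  have hA2star : star A2 = A2 := by
    rw [hA2, star_mapc]
    congr 1
    rw [Matrix.conjTranspose_pow, hQ.isHermitian.eq]
  have hKs : star u * A2 = A2 * star u := by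
    have h := congrArg star hK
    rw [Matrix.star_mul, Matrix.star_mul, hA2star] at h
    exact h.symm
  -- Ring.inverse uᵀ = (star u)ᵀ
  have hKst : A2ᵀ * (star u)ᵀ = (star u)ᵀ * A2ᵀ := by
    have h1 := congrArg Matrix.transpose hKs
    rw [hA2, mul_mapc_transpose, mapc_mul_transpose] at h1
    rw [hA2]
    exact h1
  have hA1A2t : A1ᵀ * A2ᵀ = 1 := by
    rw [hA1, hA2, ← Matrix.transpose_map, ← Matrix.transpose_map, ← Matrix.map_mul,
      ← Matrix.transpose_mul, hQ2_mul_inv, Matrix.transpose_one, hmapone]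
  have hRit : Ring.inverse uᵀ = (star u)ᵀ := by
    rw [← hstar, mul_assoc, ← hKst, ← mul_assoc, hA1A2t, one_mul]
  have hsu_ut : (star u)ᵀ * uᵀ = 1 := by
    rw [← hRit]; exact Ring.inverse_mul_cancel _ hstarQ.1
  have hut_su : uᵀ * (star u)ᵀ = 1 := by
    rw [← hRit]; exact Ring.mul_inverse_cancel _ hstarQ.1
  have hsuIsUnit : IsUnit ((star u)ᵀ) := ⟨⟨(star u)ᵀ, uᵀ, hsu_ut, hut_su⟩, rfl⟩
  have hRif : Ring.inverse ((star u)ᵀ) = uᵀ := by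
    calc Ring.inverse ((star u)ᵀ)
        = Ring.inverse ((star u)ᵀ) * ((star u)ᵀ * uᵀ) := by rw [hsu_ut, mul_one]
      _ = Ring.inverse ((star u)ᵀ) * (star u)ᵀ * uᵀ := by rw [mul_assoc]
      _ = uᵀ := by rw [Ring.inverse_mul_cancel _ hsuIsUnit, one_mul]
  -- commutation with powers
  have hmap2p : ∀ p : ℕ, (Q ^ (2 * p)).map (algebraMap ℂ (Matrix (Fin n) (Fin n) ℂ)) = A2 ^ p := by
    intro p
    have hmp : ((Q ^ 2) ^ p).map (algebraMap ℂ (Matrix (Fin n) (Fin n) ℂ)) = ((Q ^ 2).map (algebraMap ℂ (Matrix (Fin n) (Fin n) ℂ))) ^ p :=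
      map_pow ((algebraMap ℂ (Matrix (Fin n) (Fin n) ℂ))).mapMatrix (Q ^ 2) p
    rw [pow_mul, hmp, hA2]
  have hKc : Commute u A2 := hK
  have hKsc : Commute (star u) A2 := hKs
  have hcommp : ∀ p : ℕ, u * (Q ^ (2 * p)).map (algebraMap ℂ (Matrix (Fin n) (Fin n) ℂ))
      = (Q ^ (2 * p)).map (algebraMap ℂ (Matrix (Fin n) (Fin n) ℂ)) * u := by
    intro p
    rw [hmap2p]
    exact (hKc.pow_right p).eq
  have hcommps : ∀ p : ℕ, star u * (Q ^ (2 * p)).map (algebraMap ℂ (Matrix (Fin n) (Fin n) ℂ))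
      = (Q ^ (2 * p)).map (algebraMap ℂ (Matrix (Fin n) (Fin n) ℂ)) * star u := by
    intro p
    rw [hmap2p]
    exact (hKsc.pow_right p).eq
  have hpowinv : ∀ p : ℕ, Q ^ (2 * p) * (Q⁻¹) ^ (2 * p) = 1 := fun p =>
    pow_mul_pow_eq_one'' (Matrix.mul_nonsing_inv Q hdetQ)
      (Matrix.nonsing_inv_mul Q hdetQ) (2 * p)
  have hmapinv : ∀ p : ℕ,
      (Q ^ (2 * p)).map (algebraMap ℂ (Matrix (Fin n) (Fin n) ℂ)) * ((Q⁻¹) ^ (2 * p)).map (algebraMap ℂ (Matrix (Fin n) (Fin n) ℂ)) = 1 := by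
    intro p
    rw [← Matrix.map_mul, hpowinv p, hmapone]
  -- the sequence
  refine ⟨fun p => if p % 2 = 0 then u else (star u)ᵀ, by norm_num, ?_, ?_, ?_, ?_⟩
  · intro p
    show IsUnit (if p % 2 = 0 then u else (star u)ᵀ)
    by_cases h : p % 2 = 0
    · rw [if_pos h]; exact huIsUnit
    · rw [if_neg h]; exact hsuIsUnit
  · intro p
    show (if (p + 1) % 2 = 0 then u else (star u)ᵀ)
      = (Ring.inverse (if p % 2 = 0 then u else (star u)ᵀ))ᵀ
    by_cases h : p % 2 = 0
    · have h1 : ¬ ((p + 1) % 2 = 0) := by omega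
      rw [if_pos h, if_neg h1, hRiu]
    · have h1 : (p + 1) % 2 = 0 := by omega
      rw [if_pos h1, if_neg h, hRif, Matrix.transpose_transpose]
  · intro p
    have h : (2 * p) % 2 = 0 := by omega
    show (if (2 * p) % 2 = 0 then u else (star u)ᵀ) = _
    rw [if_pos h]
    rw [← hcommp p, mul_assoc, hmapinv p, mul_one]
  · intro p
    have h : ¬ ((2 * p + 1) % 2 = 0) := by omega
    show (if (2 * p + 1) % 2 = 0 then u else (star u)ᵀ) = _
    rw [if_neg h, hRiu]
    rw [Matrix.transpose_map, Matrix.transpose_map]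
    rw [← mul_mapc_transpose, ← mapc_mul_transpose]
    rw [← mul_assoc, ← hcommps p, mul_assoc, hmapinv p, mul_one]
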